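/- Let ℓ and γ be natural numbers with ℓ ≥ 2 and γ + 1 ≤ ℓ, and let n be a natural number with n ≥ 4ℓ²·ln(4ℓ). Then there exists an (n, ℓ, γ)-sharing set family of size m for some natural number m with m ≥ (2ℓ·ln(2ℓ))^{γ+1}; in particular m(n, ℓ, γ) ≥ (2ℓ·ln(2ℓ))^{γ+1}. -/

import Mathlib

open Polynomial Finset

/-- auxiliary polynomial from coefficient vector -/
noncomputable def auxPol {q : ℕ} (γ : ℕ) (c : Fin (γ+1) → ZMod q) : Polynomial (ZMod q) :=
  ∑ i : Fin (γ+1), Polynomial.C (c i) * Polynomial.X ^ (i : ℕ)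

lemma auxPol_coeff {q : ℕ} (γ : ℕ) (c : Fin (γ+1) → ZMod q) (j : Fin (γ+1)) :
    (auxPol γ c).coeff j = c j := by
  rw [auxPol, Polynomial.finset_sum_coeff, Finset.sum_eq_single j]
  · simp
  · intro i _ hij
    rw [Polynomial.coeff_C_mul, Polynomial.coeff_X_pow, if_neg, mul_zero]
    exact fun h => hij (Fin.ext h.symm)
  · simp

lemma auxPol_natDegree_le {q : ℕ} (γ : ℕ) (c : Fin (γ+1) → ZMod q) :
    (auxPol γ c).natDegree ≤ γ := by
  apply Polynomial.natDegree_sum_le_of_forall_le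
  intro i _
  exact le_trans (Polynomial.natDegree_C_mul_X_pow_le _ _) (Nat.lt_succ_iff.mp i.isLt)

lemma auxPol_agree_card {q γ ℓ : ℕ} [Fact q.Prime] (hℓq : ℓ ≤ q)
    {c c' : Fin (γ+1) → ZMod q} (hcc : c ≠ c') :
    ((Finset.range ℓ).filter fun (z : ℕ) =>
        (auxPol γ c).eval (z : ZMod q) = (auxPol γ c').eval (z : ZMod q)).card ≤ γ := by
  have hq1 : 1 < q := (Fact.out : q.Prime).one_lt
  set p := auxPol γ c - auxPol γ c' with hp
  have hp0 : p ≠ 0 := by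
    intro h
    apply hcc
    funext j
    have h2 := congrArg (fun r => r.coeff (j : ℕ)) h
    simp only [hp, Polynomial.coeff_sub, auxPol_coeff, Polynomial.coeff_zero] at h2
    exact sub_eq_zero.mp h2
  have hdeg : p.natDegree ≤ γ :=
    le_trans (Polynomial.natDegree_sub_le _ _)
      (max_le (auxPol_natDegree_le γ c) (auxPol_natDegree_le γ c'))
  calc ((Finset.range ℓ).filter fun (z : ℕ) =>
        (auxPol γ c).eval (z : ZMod q) = (auxPol γ c').eval (z : ZMod q)).card
      ≤ p.roots.toFinset.card := by
        apply Finset.card_le_card_of_injOn (fun (z : ℕ) => (z : ZMod q))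
        · intro x hx
          simp only [Finset.mem_coe, Finset.mem_filter, Finset.mem_range] at hx ⊢
          rw [Multiset.mem_toFinset, Polynomial.mem_roots hp0]
          simp [hp, Polynomial.IsRoot, hx.2]
        · intro x hx y hy hxy
          simp only [Finset.mem_coe, Finset.mem_filter, Finset.mem_range] at hx hy
          have := congrArg (ZMod.val) hxy
          rwa [ZMod.val_cast_of_lt (lt_of_lt_of_le hx.1 hℓq),
            ZMod.val_cast_of_lt (lt_of_lt_of_le hy.1 hℓq)] at this
    _ ≤ Multiset.card p.roots := Multiset.toFinset_card_le _
    _ ≤ p.natDegree := Polynomial.card_roots' p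
    _ ≤ γ := hdeg

lemma aux_encode {q x y a b : ℕ} (ha : a < q) (hb : b < q)
    (h : q * x + a = q * y + b) : x = y ∧ a = b := by
  have hq : 0 < q := by omega
  have hx : (q * x + a) / q = x := by
    rw [Nat.mul_add_div hq, Nat.div_eq_of_lt ha, add_zero]
  have hy : (q * y + b) / q = y := by
    rw [Nat.mul_add_div hq, Nat.div_eq_of_lt hb, add_zero]
  have hxy : x = y := by rw [← hx, ← hy, h]
  refine ⟨hxy, ?_⟩
  subst hxy
  omega

/-- For n ≥ 4ℓ²·ln(4ℓ) there is an (n, ℓ, γ)-sharing set family of size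
m ≥ (2ℓ·ln(2ℓ))^{γ+1}. -/
theorem stmt4 (ℓ γ n : ℕ) (hℓ : 2 ≤ ℓ) (hγ : γ + 1 ≤ ℓ)
    (hn : (4 * ℓ ^ 2 : ℝ) * Real.log (4 * ℓ) ≤ n) :
    ∃ (m : ℕ) (S : Fin m → Finset ℕ),
      ((2 * ℓ * Real.log (2 * ℓ)) ^ (γ + 1) ≤ (m : ℝ)) ∧
      Function.Injective S ∧
      (∀ i, S i ⊆ Finset.Icc 1 n) ∧
      (∀ i, (S i).card = ℓ) ∧
      (∀ i j, i ≠ j → (S i ∩ S j).card ≤ γ) := by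
  have hℓR : (2 : ℝ) ≤ (ℓ : ℝ) := by exact_mod_cast hℓ
  have hlog1 : (1 : ℝ) ≤ Real.log (2 * ℓ) := by
    have h4 : Real.exp 1 ≤ 2 * (ℓ : ℝ) := by
      have := Real.exp_one_lt_d9
      nlinarith
    calc (1 : ℝ) = Real.log (Real.exp 1) := (Real.log_exp 1).symm
      _ ≤ Real.log (2 * ℓ) := Real.log_le_log (Real.exp_pos 1) h4
  set x : ℝ := 2 * (ℓ : ℝ) * Real.log (2 * ℓ) with hxdef
  have hxpos : 0 < x := by nlinarith
  set k : ℕ := ⌈x⌉₊ with hkdef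
  have hk0 : k ≠ 0 := by
    simp only [hkdef, ne_eq, Nat.ceil_eq_zero, not_le]
    exact hxpos
  obtain ⟨q, hqp, hkq, hq2k⟩ := Nat.exists_prime_lt_and_le_two_mul k hk0
  haveI : Fact q.Prime := ⟨hqp⟩
  have hq1 : 1 < q := hqp.one_lt
  have hxq : x ≤ (q : ℝ) := le_trans (Nat.le_ceil x) (by exact_mod_cast hkq.le)
  have hℓq : ℓ ≤ q := by
    have : (ℓ : ℝ) ≤ (q : ℝ) := by nlinarith
    exact_mod_cast this
  -- ℓ * q ≤ n
  have hqk2 : (q : ℝ) ≤ 2 * k := by exact_mod_cast hq2k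
  have hkx1 : (k : ℝ) < x + 1 := Nat.ceil_lt_add_one hxpos.le
  have hlog4 : Real.log (4 * ℓ) = Real.log 2 + Real.log (2 * ℓ) := by
    rw [← Real.log_mul (by norm_num) (by positivity)]
    ring_nf
  have hlog2 : (0.6931471803 : ℝ) < Real.log 2 := Real.log_two_gt_d9
  have hℓqn : (ℓ : ℝ) * q ≤ n := by
    have h1 : (ℓ : ℝ) * q ≤ (ℓ : ℝ) * (2 * (x + 1)) := by nlinarith
    have h2 : (ℓ : ℝ) * (2 * (x + 1)) ≤ 4 * (ℓ:ℝ) ^ 2 * Real.log (4 * ℓ) := by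
      rw [hlog4]; nlinarith
    linarith
  have hℓqn' : ℓ * q ≤ n := by exact_mod_cast hℓqn
  -- family
  set m : ℕ := q ^ (γ + 1) with hmdef
  have hcard : Fintype.card (Fin (γ+1) → ZMod q) = m := by
    simp [hmdef, ZMod.card]
  set e : Fin m ≃ (Fin (γ+1) → ZMod q) := (Fintype.equivFinOfCardEq hcard).symm with hedef
  set enc : (Fin (γ+1) → ZMod q) → ℕ → ℕ :=
    fun c x => q * x + ((auxPol γ c).eval (x : ZMod q)).val + 1 with hencdef
  set T : (Fin (γ+1) → ZMod q) → Finset ℕ := fun c => (Finset.range ℓ).image (enc c) with hTdef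
  have hinjenc : ∀ c c' x y, x < ℓ → y < ℓ → enc c x = enc c' y →
      x = y ∧ (auxPol γ c).eval (x : ZMod q) = (auxPol γ c').eval (y : ZMod q) := by
    intro c c' x y hx hy h
    have h' : q * x + ((auxPol γ c).eval (x : ZMod q)).val
        = q * y + ((auxPol γ c').eval (y : ZMod q)).val := by
      simpa [hencdef] using h
    obtain ⟨h1, h2⟩ := aux_encode (ZMod.val_lt _) (ZMod.val_lt _) h'
    refine ⟨h1, ?_⟩
    have : ((auxPol γ c).eval (x : ZMod q)).val = ((auxPol γ c').eval (y : ZMod q)).val := h2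
    exact ZMod.val_injective q this
  have hTcard : ∀ c, (T c).card = ℓ := by
    intro c
    rw [hTdef]
    rw [Finset.card_image_of_injOn, Finset.card_range]
    intro a ha b hb hab
    exact (hinjenc c c a b (Finset.mem_range.mp ha) (Finset.mem_range.mp hb) hab).1
  have hTinter : ∀ c c', c ≠ c' → (T c ∩ T c').card ≤ γ := by
    intro c c' hcc
    have hsub : T c ∩ T c' ⊆ ((Finset.range ℓ).filter fun (z : ℕ) =>
        (auxPol γ c).eval (z : ZMod q) = (auxPol γ c').eval (z : ZMod q)).image (enc c) := by
      intro a ha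
      rw [Finset.mem_inter] at ha
      obtain ⟨ha1, ha2⟩ := ha
      rw [hTdef] at ha1 ha2
      simp only [Finset.mem_image, Finset.mem_range] at ha1 ha2
      obtain ⟨z, hz, rfl⟩ := ha1
      obtain ⟨w, hw, hew⟩ := ha2
      obtain ⟨h1, h2⟩ := hinjenc c' c w z hw hz hew
      subst h1
      refine Finset.mem_image.mpr ⟨w, Finset.mem_filter.mpr ⟨Finset.mem_range.mpr hw, h2.symm⟩, rfl⟩
    calc (T c ∩ T c').card ≤ _ := Finset.card_le_card hsub
      _ ≤ _ := Finset.card_image_le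
      _ ≤ γ := auxPol_agree_card hℓq hcc
  refine ⟨m, fun i => T (e i), ?_, ?_, ?_, ?_, ?_⟩
  · have : x ^ (γ + 1) ≤ (q : ℝ) ^ (γ + 1) := pow_le_pow_left₀ hxpos.le hxq _
    calc (2 * (ℓ:ℝ) * Real.log (2 * ℓ)) ^ (γ + 1) = x ^ (γ+1) := by rw [hxdef]
      _ ≤ (q : ℝ) ^ (γ + 1) := this
      _ = (m : ℝ) := by rw [hmdef]; push_cast; ring
  · intro i j hij
    by_contra hne
    have hcc : e i ≠ e j := fun h => hne (e.injective h)
    have h2 := hTinter (e i) (e j) hcc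
    have hij' : T (e i) = T (e j) := hij
    rw [hij', Finset.inter_self, hTcard] at h2
    omega
  · intro i a ha
    rw [hTdef] at ha
    simp only [Finset.mem_image, Finset.mem_range] at ha
    obtain ⟨z, hz, rfl⟩ := ha
    rw [Finset.mem_Icc]
    constructor
    · simp [hencdef]
    · have hv : ((auxPol γ (e i)).eval (z : ZMod q)).val < q := ZMod.val_lt _
      have : q * z + q ≤ q * ℓ := by
        have : z + 1 ≤ ℓ := hz
        calc q * z + q = q * (z + 1) := by ring
          _ ≤ q * ℓ := Nat.mul_le_mul_left q this
      simp only [hencdef]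
      calc q * z + ((auxPol γ (e i)).eval (z : ZMod q)).val + 1 ≤ q * z + q := by omega
        _ ≤ q * ℓ := this
        _ ≤ n := by rw [mul_comm]; exact hℓqn'
  · intro i; exact hTcard (e i)
  · intro i j hij
    exact hTinter (e i) (e j) (fun h => hij (e.injective h))
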